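/- Let d ≥ 1, let ε_C > 0, let u ∈ ℝ^d be a unit vector, and let s_i = ℓ_i•u and s_j = ℓ_j•u with ℓ_i, ℓ_j > 0 be two sites on a common ray from the origin 0. Let w_i ≥ 1 + ε_C and w_j > 1 be effective weights, and set t*_k := ℓ_k/(w_k + 1) and t†_k := ℓ_k/(w_k − 1) for k ∈ {i, j}. Assume the two Apollonian balls have equal diameters, i.e., t*_i + t†_i = t*_j + t†_j, that min(t*_i, t*_j) ≥ 1, and that |t*_i − t*_j| ≤ ε_C/2. Then ball(0,s_j,w_j) ⊆ ball(0,s_i,w_i/(1+ε_C)); that is, {p ∈ ℝ^d : w_j·‖p‖ ≤ ‖p − s_j‖} ⊆ {p ∈ ℝ^d : (w_i/(1+ε_C))·‖p‖ ≤ ‖p − s_i‖}. -/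

import Mathlib

set_option maxHeartbeats 1000000

/-- In-disc bounds for an Apollonian ball on a line. -/
private lemma scan_cone_quad (ℓ w x q : ℝ) (hℓ : 0 < ℓ) (hw : 1 < w)
    (hxq : x ^ 2 ≤ q) (h : w ^ 2 * q ≤ q - 2 * ℓ * x + ℓ ^ 2) :
    x ≤ ℓ / (w + 1) ∧ -(ℓ / (w - 1)) ≤ x ∧
      q - x ^ 2 ≤ (ℓ / (w + 1) - x) * (ℓ / (w - 1) + x) := by
  have hwp : (0:ℝ) < w + 1 := by linarith
  have hwm : (0:ℝ) < w - 1 := by linarith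
  have hw2 : (0:ℝ) < w ^ 2 - 1 := by nlinarith
  have hq' : (w ^ 2 - 1) * x ^ 2 ≤ (w ^ 2 - 1) * q := mul_le_mul_of_nonneg_left hxq hw2.le
  have hfac : ((w + 1) * x - ℓ) * ((w - 1) * x + ℓ) ≤ 0 := by nlinarith [h, hq']
  have hx1 : (w + 1) * x ≤ ℓ := by
    by_contra hc
    push_neg at hc
    have hxpos : 0 < x := by nlinarith
    nlinarith [mul_pos (show (0:ℝ) < (w + 1) * x - ℓ by linarith)
      (show (0:ℝ) < (w - 1) * x + ℓ by nlinarith)]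
  have hx2 : -ℓ ≤ (w - 1) * x := by
    by_contra hc
    push_neg at hc
    have hxneg : x < 0 := by nlinarith
    nlinarith [mul_pos (show (0:ℝ) < ℓ - (w + 1) * x by nlinarith)
      (show (0:ℝ) < -((w - 1) * x + ℓ) by linarith)]
  refine ⟨by rw [le_div_iff₀ hwp]; linarith, by rw [neg_le, le_div_iff₀ hwm]; nlinarith, ?_⟩
  have hid : (w ^ 2 - 1) * ((ℓ / (w + 1) - x) * (ℓ / (w - 1) + x))
      = ℓ ^ 2 - 2 * ℓ * x - (w ^ 2 - 1) * x ^ 2 := by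
    field_simp
    ring
  have h2 : (w ^ 2 - 1) * (q - x ^ 2)
      ≤ (w ^ 2 - 1) * ((ℓ / (w + 1) - x) * (ℓ / (w - 1) + x)) := by
    rw [hid]; nlinarith [h]
  exact le_of_mul_le_mul_left h2 hw2

/-- Converse direction: in-disc bounds give membership. -/
private lemma scan_cone_quad' (ℓ v x q : ℝ) (hℓ : 0 < ℓ) (hv : 1 < v)
    (hxq : x ^ 2 ≤ q)
    (h : q - x ^ 2 ≤ (ℓ / (v + 1) - x) * (ℓ / (v - 1) + x)) :
    v ^ 2 * q ≤ q - 2 * ℓ * x + ℓ ^ 2 := by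
  have hvp : (0:ℝ) < v + 1 := by linarith
  have hvm : (0:ℝ) < v - 1 := by linarith
  have hv2 : (0:ℝ) ≤ v ^ 2 - 1 := by nlinarith
  have hid : (v ^ 2 - 1) * ((ℓ / (v + 1) - x) * (ℓ / (v - 1) + x))
      = ℓ ^ 2 - 2 * ℓ * x - (v ^ 2 - 1) * x ^ 2 := by
    field_simp
    ring
  have h2 := mul_le_mul_of_nonneg_left h hv2
  rw [hid] at h2
  nlinarith [h2]

/-- Enlarging the near surface-distance: `t*_i + εC/2 ≤ t'*_i`. -/
private lemma scan_cone_near (εC ℓi wi : ℝ) (hεC : 0 < εC) (hℓi : 0 < ℓi)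
    (hwi : 1 + εC ≤ wi) (hℓiwi : wi + 1 ≤ ℓi) :
    ℓi / (wi + 1) + εC / 2 ≤ ℓi / (wi / (1 + εC) + 1) := by
  have hε1 : (0:ℝ) < 1 + εC := by linarith
  have hwp : (0:ℝ) < wi + 1 := by linarith
  have hwp' : wi + 1 ≠ 0 := ne_of_gt hwp
  have hveq : ℓi / (wi / (1 + εC) + 1) = ℓi * (1 + εC) / (wi + 1 + εC) := by
    rw [show wi / (1 + εC) + 1 = (wi + 1 + εC) / (1 + εC) by field_simp; ring,
      div_div_eq_mul_div]
  rw [hveq, show ℓi / (wi + 1) + εC / 2 = (2 * ℓi + εC * (wi + 1)) / (2 * (wi + 1)) by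
    field_simp, div_le_div_iff₀ (by linarith) (by linarith)]
  have k : (wi + 1) * (wi + 1 + εC) ≤ ℓi * (2 * wi) :=
    mul_le_mul hℓiwi (by linarith) (by linarith) hℓi.le
  nlinarith [mul_nonneg hεC.le (sub_nonneg.2 k)]

/-- Enlarging the far surface-distance: `t†_i + εC/2 ≤ t'†_i` (when `wi > 1 + εC`). -/
private lemma scan_cone_far (εC ℓi wi : ℝ) (hεC : 0 < εC) (hℓi : 0 < ℓi)
    (hwi : 1 + εC < wi) (hℓiwi : wi + 1 ≤ ℓi) :
    ℓi / (wi - 1) + εC / 2 ≤ ℓi / (wi / (1 + εC) - 1) := by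
  have hε1 : (0:ℝ) < 1 + εC := by linarith
  have hwm : (0:ℝ) < wi - 1 := by linarith
  have hwm' : wi - 1 ≠ 0 := ne_of_gt hwm
  have hveq : ℓi / (wi / (1 + εC) - 1) = ℓi * (1 + εC) / (wi - 1 - εC) := by
    rw [show wi / (1 + εC) - 1 = (wi - 1 - εC) / (1 + εC) by field_simp; ring,
      div_div_eq_mul_div]
  rw [hveq, show ℓi / (wi - 1) + εC / 2 = (2 * ℓi + εC * (wi - 1)) / (2 * (wi - 1)) by
    field_simp, div_le_div_iff₀ (by linarith) (by linarith)]
  have k : (wi - 1) * (wi - 1 - εC) ≤ ℓi * (2 * wi) :=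
    mul_le_mul (by linarith) (by linarith) (by linarith) hℓi.le
  nlinarith [mul_nonneg hεC.le (sub_nonneg.2 k)]

/-- Pure real-arithmetic core of the scan-cone covering lemma. -/
private lemma scan_cone_core (εC ℓi ℓj wi wj x q : ℝ) (hεC : 0 < εC)
    (hℓi : 0 < ℓi) (hℓj : 0 < ℓj)
    (hwi : 1 + εC ≤ wi) (hwj : 1 < wj)
    (hdiam : ℓi / (wi + 1) + ℓi / (wi - 1) = ℓj / (wj + 1) + ℓj / (wj - 1))
    (hmin : 1 ≤ min (ℓi / (wi + 1)) (ℓj / (wj + 1)))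
    (hclose : |ℓi / (wi + 1) - ℓj / (wj + 1)| ≤ εC / 2)
    (hxq : x ^ 2 ≤ q)
    (hp2 : wj ^ 2 * q ≤ q - 2 * ℓj * x + ℓj ^ 2) :
    (wi / (1 + εC)) ^ 2 * q ≤ q - 2 * ℓi * x + ℓi ^ 2 := by
  have hε1 : (0:ℝ) < 1 + εC := by linarith
  have hwip : (0:ℝ) < wi + 1 := by linarith
  have hℓiwi : wi + 1 ≤ ℓi := by
    have h1 : (1:ℝ) ≤ ℓi / (wi + 1) := le_trans hmin (min_le_left _ _)
    rw [le_div_iff₀ hwip] at h1; linarith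
  have hc1 : ℓi / (wi + 1) - ℓj / (wj + 1) ≤ εC / 2 := (abs_le.mp hclose).2
  have hc2 : ℓj / (wj + 1) - ℓi / (wi + 1) ≤ εC / 2 := by
    have := (abs_le.mp hclose).1; linarith
  obtain ⟨hxtj, hxTj, hmain⟩ := scan_cone_quad ℓj wj x q hℓj hwj hxq hp2
  have hstep1 := scan_cone_near εC ℓi wi hεC hℓi hwi hℓiwi
  have hP1 : ℓj / (wj + 1) ≤ ℓi / (wi / (1 + εC) + 1) := by linarith
  have hv1 : 1 ≤ wi / (1 + εC) := by rw [le_div_iff₀ hε1]; linarith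
  rcases eq_or_lt_of_le hv1 with hveq1 | hvlt
  · -- v = 1 : the enlarged ball is a halfspace
    have hxle : x ≤ ℓi / 2 := by
      have h := hxtj.trans hP1
      rw [← hveq1] at h
      norm_num at h
      linarith
    rw [← hveq1]
    nlinarith [hxle, hℓi, hxq]
  · -- v > 1
    have hwie : 1 + εC < wi := by
      rw [lt_div_iff₀ hε1] at hvlt; linarith
    have hstep2 := scan_cone_far εC ℓi wi hεC hℓi hwie hℓiwi
    have hP2 : ℓj / (wj - 1) ≤ ℓi / (wi / (1 + εC) - 1) := by
      have h : ℓj / (wj - 1) = ℓi / (wi + 1) + ℓi / (wi - 1) - ℓj / (wj + 1) := by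
        linarith [hdiam]
      rw [h]; linarith
    have hmono : (ℓj / (wj + 1) - x) * (ℓj / (wj - 1) + x)
        ≤ (ℓi / (wi / (1 + εC) + 1) - x) * (ℓi / (wi / (1 + εC) - 1) + x) :=
      mul_le_mul (by linarith) (by linarith) (by linarith) (by linarith)
    exact scan_cone_quad' ℓi (wi / (1 + εC)) x q hℓi hvlt hxq (hmain.trans hmono)

/-- Equal-diameter case of the constant-per-ray lemma: for two sites on a common ray from
the origin whose Apollonian balls have equal diameters, near surface-distances at least 1
and differing by at most `εC/2`, the ball of `s_j` is contained in the `(1+εC)`-enlarged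
ball of `s_i`. -/
theorem scan_cone_covers (d : ℕ) (hd : 1 ≤ d) (εC : ℝ) (hεC : 0 < εC)
    (u : EuclideanSpace ℝ (Fin d)) (hu : ‖u‖ = 1)
    (ℓi ℓj wi wj : ℝ) (hℓi : 0 < ℓi) (hℓj : 0 < ℓj)
    (hwi : 1 + εC ≤ wi) (hwj : 1 < wj)
    (hdiam : ℓi / (wi + 1) + ℓi / (wi - 1) = ℓj / (wj + 1) + ℓj / (wj - 1))
    (hmin : 1 ≤ min (ℓi / (wi + 1)) (ℓj / (wj + 1)))
    (hclose : |ℓi / (wi + 1) - ℓj / (wj + 1)| ≤ εC / 2) :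
    {p : EuclideanSpace ℝ (Fin d) | wj * ‖p‖ ≤ ‖p - ℓj • u‖} ⊆
      {p : EuclideanSpace ℝ (Fin d) | (wi / (1 + εC)) * ‖p‖ ≤ ‖p - ℓi • u‖} := by
  intro p hp
  simp only [Set.mem_setOf_eq] at hp ⊢
  obtain ⟨x, hxdef⟩ : ∃ x : ℝ, x = inner ℝ p u := ⟨_, rfl⟩
  obtain ⟨n, hndef⟩ : ∃ n : ℝ, n = ‖p‖ := ⟨_, rfl⟩
  have hx : |x| ≤ n := by
    rw [hxdef, hndef]
    have h := abs_real_inner_le_norm p u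
    rwa [hu, mul_one] at h
  have hxq : x ^ 2 ≤ n ^ 2 := by
    calc x ^ 2 = |x| ^ 2 := (sq_abs x).symm
      _ ≤ n ^ 2 := pow_le_pow_left₀ (abs_nonneg x) hx 2
  have hnormj : ‖p - ℓj • u‖ ^ 2 = n ^ 2 - 2 * ℓj * x + ℓj ^ 2 := by
    rw [norm_sub_sq_real, real_inner_smul_right, norm_smul, hu, Real.norm_eq_abs,
      abs_of_pos hℓj, ← hxdef, hndef]
    ring
  have hnormi : ‖p - ℓi • u‖ ^ 2 = n ^ 2 - 2 * ℓi * x + ℓi ^ 2 := by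
    rw [norm_sub_sq_real, real_inner_smul_right, norm_smul, hu, Real.norm_eq_abs,
      abs_of_pos hℓi, ← hxdef, hndef]
    ring
  have hn0 : 0 ≤ n := hndef ▸ norm_nonneg p
  have hp2 : wj ^ 2 * n ^ 2 ≤ n ^ 2 - 2 * ℓj * x + ℓj ^ 2 := by
    rw [← hnormj]
    have h2 : (wj * n) ^ 2 ≤ ‖p - ℓj • u‖ ^ 2 := by
      rw [hndef]
      exact pow_le_pow_left₀ (by positivity) hp 2
    nlinarith [h2]
  have key : (wi / (1 + εC)) ^ 2 * n ^ 2 ≤ n ^ 2 - 2 * ℓi * x + ℓi ^ 2 :=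
    scan_cone_core εC ℓi ℓj wi wj x (n ^ 2) hεC hℓi hℓj hwi hwj hdiam hmin hclose hxq hp2
  have h1 : (wi / (1 + εC) * n) ^ 2 ≤ ‖p - ℓi • u‖ ^ 2 := by
    rw [hnormi]; nlinarith [key]
  have hvn : 0 ≤ wi / (1 + εC) * n :=
    mul_nonneg (div_nonneg (by linarith) (by linarith)) hn0
  calc wi / (1 + εC) * ‖p‖ = wi / (1 + εC) * n := by rw [hndef]
    _ = Real.sqrt ((wi / (1 + εC) * n) ^ 2) := (Real.sqrt_sq hvn).symm
    _ ≤ Real.sqrt (‖p - ℓi • u‖ ^ 2) := Real.sqrt_le_sqrt h1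
    _ = ‖p - ℓi • u‖ := Real.sqrt_sq (norm_nonneg _)
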